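/- Let T ∈ ℝ, J = [T,∞), and let u : J × ℝ → ℝ be continuous with u(t,·) ∈ L²(ℝ) for every t ∈ J and sup_{t ∈ J} ‖u(t)‖_{L²} < ∞. Let m, m̃ : J → ℝ satisfy m(t) ≤ m̃(t) ≤ m(t) + 1 for all t ∈ J, and assume the non-dispersion property: for every ε > 0 there exists R_ε > 0 with ∫_{x < m(t) − R_ε} u²(t,x) dx ≤ ε for all t ∈ J. Let f : ℝ → ℝ be an increasing affine function, κ > 0, φ(x) := 1/2 − (1/π) arctan(e^{κx}), and for t₀ ∈ J, x₀ ∈ ℝ define I_{(t₀,x₀)}(t) := ∫_ℝ u²(t, x + m̃(t)) φ(x − x₀ + f(t) − f(t₀)) dx. Then for each fixed x₀ ∈ ℝ and t₀ ∈ J, I_{(t₀,x₀)}(t) → 0 as t → +∞. -/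

import Mathlib

open MeasureTheory Real

/-- the localized mass
`I_{(t₀,x₀)}(t) = ∫ u²(t, x + m̃(t)) φ(x − x₀ + f(t) − f(t₀)) dx` tends to `0`
as `t → +∞`. -/
theorem localized_mass_tendsto_zero
    (T : ℝ) (u : ℝ → ℝ → ℝ)
    (hcont : ContinuousOn (fun q : ℝ × ℝ => u q.1 q.2) (Set.Ici T ×ˢ Set.univ))
    (hL2 : ∀ t ≥ T, MemLp (u t) 2 volume)
    (hbdd : ∃ M : ℝ, ∀ t ≥ T, (∫ x : ℝ, (u t x) ^ 2) ≤ M)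
    (m mt : ℝ → ℝ)
    (hsandwich : ∀ t ≥ T, m t ≤ mt t ∧ mt t ≤ m t + 1)
    (hnondisp : ∀ ε > 0, ∃ R > 0, ∀ t ≥ T,
      ∫ x in Set.Iio (m t - R), (u t x) ^ 2 ≤ ε)
    (f : ℝ → ℝ) (hf : ∃ A B : ℝ, 0 < A ∧ ∀ t : ℝ, f t = A * t + B)
    (κ : ℝ) (hκ : 0 < κ) (φ : ℝ → ℝ)
    (hφ : ∀ x : ℝ, φ x = 1 / 2 - (1 / Real.pi) * Real.arctan (Real.exp (κ * x))) :
    ∀ x₀ : ℝ, ∀ t₀ ≥ T,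
      Filter.Tendsto
        (fun t => ∫ x : ℝ, (u t (x + mt t)) ^ 2 * φ (x - x₀ + f t - f t₀))
        Filter.atTop (nhds 0) := by
  obtain ⟨M, hM⟩ := hbdd
  obtain ⟨A, B, hA, hfAB⟩ := hf
  intro x₀ t₀ ht₀
  have hπ : (0:ℝ) < Real.pi := Real.pi_pos
  -- φ is nonnegative and bounded by 1
  have hφ0 : ∀ x, 0 ≤ φ x := by
    intro x
    rw [hφ x]
    have h1 : Real.arctan (Real.exp (κ * x)) < Real.pi / 2 :=
      Real.arctan_lt_pi_div_two _
    have : (1 / Real.pi) * Real.arctan (Real.exp (κ * x)) ≤ (1 / Real.pi) * (Real.pi / 2) := by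
      apply mul_le_mul_of_nonneg_left h1.le (by positivity)
    have h2 : (1 / Real.pi) * (Real.pi / 2) = 1 / 2 := by field_simp
    linarith
  have hφ1 : ∀ x, φ x ≤ 1 := by
    intro x
    rw [hφ x]
    have h1 : 0 < Real.arctan (Real.exp (κ * x)) := by
      rw [← Real.arctan_zero]
      exact Real.arctan_strictMono (Real.exp_pos _)
    have h2 : 0 ≤ (1 / Real.pi) * Real.arctan (Real.exp (κ * x)) := by positivity
    linarith
  -- φ tends to 0 at +∞
  have hφtend : Filter.Tendsto φ Filter.atTop (nhds 0) := by
    have h1 : Filter.Tendsto (fun x : ℝ => κ * x) Filter.atTop Filter.atTop :=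
      Filter.Tendsto.const_mul_atTop hκ Filter.tendsto_id
    have h2 : Filter.Tendsto (fun x : ℝ => Real.exp (κ * x)) Filter.atTop Filter.atTop :=
      Real.tendsto_exp_atTop.comp h1
    have h3 : Filter.Tendsto (fun x : ℝ => Real.arctan (Real.exp (κ * x)))
        Filter.atTop (nhds (Real.pi / 2)) :=
      (Real.tendsto_arctan_atTop.mono_right nhdsWithin_le_nhds).comp h2
    have h4 : Filter.Tendsto (fun x : ℝ => 1 / 2 - (1 / Real.pi) * Real.arctan (Real.exp (κ * x)))
        Filter.atTop (nhds (1 / 2 - (1 / Real.pi) * (Real.pi / 2))) :=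
      (tendsto_const_nhds.sub (tendsto_const_nhds.mul h3))
    have h5 : (1:ℝ) / 2 - (1 / Real.pi) * (Real.pi / 2) = 0 := by field_simp; ring
    rw [h5] at h4
    exact h4.congr (fun x => (hφ x).symm)
  have hM0 : 0 ≤ M := by
    refine le_trans ?_ (hM T le_rfl)
    positivity
  rw [Metric.tendsto_atTop]
  intro ε hε
  obtain ⟨R, hR, hRprop⟩ := hnondisp (ε / 2) (by positivity)
  set δ : ℝ := ε / (4 * (M + 1)) with hδdef
  have hδ : 0 < δ := by positivity
  obtain ⟨c, hc⟩ := Filter.eventually_atTop.mp (hφtend.eventually (gt_mem_nhds hδ))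
  -- threshold for t
  refine ⟨max T ((c + x₀ + R + 1 + f t₀ - B) / A), fun t ht => ?_⟩
  have htT : T ≤ t := le_trans (le_max_left _ _) ht
  have htf : c + x₀ + R + 1 + f t₀ ≤ f t := by
    rw [hfAB t]
    have := le_trans (le_max_right _ _) ht
    have := (div_le_iff₀ hA).mp this
    linarith
  -- integrability facts
  have hu2 : Integrable (fun x : ℝ => (u t x) ^ 2) := (hL2 t htT).integrable_sq
  have hu2s : Integrable (fun x : ℝ => (u t (x + mt t)) ^ 2) := hu2.comp_add_right (mt t)
  have hφmeas : AEStronglyMeasurable (fun x : ℝ => φ (x - x₀ + f t - f t₀)) volume := by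
    have : Continuous fun x : ℝ => φ (x - x₀ + f t - f t₀) := by
      have hφc : Continuous φ := by
        have : Continuous fun x : ℝ =>
            1 / 2 - (1 / Real.pi) * Real.arctan (Real.exp (κ * x)) :=
          continuous_const.sub (continuous_const.mul
            (Real.continuous_arctan.comp (Real.continuous_exp.comp
              (continuous_const.mul continuous_id))))
        exact this.congr (fun x => (hφ x).symm)
      exact hφc.comp (((continuous_id.sub continuous_const).add
        continuous_const).sub continuous_const)
    exact this.aestronglyMeasurable
  have hg : Integrable (fun x : ℝ => (u t (x + mt t)) ^ 2 * φ (x - x₀ + f t - f t₀)) := by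
    have := hu2s.bdd_mul hφmeas (c := 1) (Filter.Eventually.of_forall fun x => by
      rw [Real.norm_eq_abs, abs_of_nonneg (hφ0 _)]; exact hφ1 _)
    exact this.congr (Filter.Eventually.of_forall fun x => mul_comm _ _)
  -- the RHS dominating function
  have hind : Integrable
      (fun x : ℝ => Set.indicator (Set.Iio (-R - 1)) (fun x => (u t (x + mt t)) ^ 2) x) :=
    hu2s.indicator measurableSet_Iio
  have hδu : Integrable (fun x : ℝ => δ * (u t (x + mt t)) ^ 2) := hu2s.const_mul δ
  -- pointwise bound
  have hpt : ∀ x : ℝ, (u t (x + mt t)) ^ 2 * φ (x - x₀ + f t - f t₀) ≤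
      Set.indicator (Set.Iio (-R - 1)) (fun x => (u t (x + mt t)) ^ 2) x
        + δ * (u t (x + mt t)) ^ 2 := by
    intro x
    by_cases hx : x < -R - 1
    · have h1 : (u t (x + mt t)) ^ 2 * φ (x - x₀ + f t - f t₀) ≤ (u t (x + mt t)) ^ 2 := by
        nlinarith [hφ0 (x - x₀ + f t - f t₀), hφ1 (x - x₀ + f t - f t₀), sq_nonneg (u t (x + mt t))]
      rw [Set.indicator_of_mem (show x ∈ Set.Iio (-R - 1) from hx)]
      nlinarith [sq_nonneg (u t (x + mt t))]
    · push_neg at hx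
      have harg : c ≤ x - x₀ + f t - f t₀ := by linarith
      have hφsmall : φ (x - x₀ + f t - f t₀) ≤ δ := (hc _ harg).le
      rw [Set.indicator_of_notMem (show x ∉ Set.Iio (-R - 1) from not_lt.mpr hx)]
      nlinarith [sq_nonneg (u t (x + mt t)), hφ0 (x - x₀ + f t - f t₀)]
  have hIle : (∫ x : ℝ, (u t (x + mt t)) ^ 2 * φ (x - x₀ + f t - f t₀)) ≤
      (∫ x : ℝ, Set.indicator (Set.Iio (-R - 1)) (fun x => (u t (x + mt t)) ^ 2) x
        + δ * (u t (x + mt t)) ^ 2) :=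
    integral_mono hg (hind.add hδu) hpt
  -- compute the RHS
  have hsplit : (∫ x : ℝ, Set.indicator (Set.Iio (-R - 1)) (fun x => (u t (x + mt t)) ^ 2) x
        + δ * (u t (x + mt t)) ^ 2)
      = (∫ x in Set.Iio (-R - 1), (u t (x + mt t)) ^ 2) + δ * ∫ x : ℝ, (u t (x + mt t)) ^ 2 := by
    rw [integral_add hind hδu, integral_indicator measurableSet_Iio, integral_const_mul]
  -- translate first term
  have htrans : (∫ x in Set.Iio (-R - 1), (u t (x + mt t)) ^ 2)
      = ∫ x in Set.Iio (-R - 1 + mt t), (u t x) ^ 2 := by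
    rw [← integral_indicator measurableSet_Iio, ← integral_indicator measurableSet_Iio]
    rw [← integral_add_right_eq_self
      (fun x => Set.indicator (Set.Iio (-R - 1 + mt t)) (fun y => (u t y) ^ 2) x) (mt t)]
    congr 1
    ext x
    by_cases hx : x < -R - 1
    · rw [Set.indicator_of_mem (show x ∈ Set.Iio (-R - 1) from hx),
        Set.indicator_of_mem (show x + mt t ∈ Set.Iio (-R - 1 + mt t) by
          simp only [Set.mem_Iio]; linarith)]
    · rw [Set.indicator_of_notMem (show x ∉ Set.Iio (-R - 1) from hx),
        Set.indicator_of_notMem (show x + mt t ∉ Set.Iio (-R - 1 + mt t) by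
          simp only [Set.mem_Iio, not_lt] at hx ⊢; linarith)]
  have htrans2 : (∫ x : ℝ, (u t (x + mt t)) ^ 2) = ∫ x : ℝ, (u t x) ^ 2 :=
    integral_add_right_eq_self (fun x => (u t x) ^ 2) (mt t)
  -- first term small
  have hterm1 : (∫ x in Set.Iio (-R - 1 + mt t), (u t x) ^ 2) ≤ ε / 2 := by
    refine le_trans ?_ (hRprop t htT)
    apply setIntegral_mono_set (hu2.integrableOn)
      (Filter.Eventually.of_forall fun x => sq_nonneg _)
    refine Filter.Eventually.of_forall fun x hx => ?_
    have hx' : x < -R - 1 + mt t := hx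
    have := (hsandwich t htT).2
    show x < m t - R
    linarith
  -- second term small
  have hterm2 : δ * (∫ x : ℝ, (u t x) ^ 2) ≤ ε / 4 := by
    have h1 : (∫ x : ℝ, (u t x) ^ 2) ≤ M := hM t htT
    have h2 : δ * (∫ x : ℝ, (u t x) ^ 2) ≤ δ * M :=
      mul_le_mul_of_nonneg_left h1 hδ.le
    have h3 : δ * M ≤ ε / 4 := by
      rw [hδdef]
      rw [div_mul_eq_mul_div, div_le_div_iff₀ (by positivity) (by norm_num)]
      nlinarith
    linarith
  -- nonnegativity of I t
  have hI0 : 0 ≤ ∫ x : ℝ, (u t (x + mt t)) ^ 2 * φ (x - x₀ + f t - f t₀) := by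
    apply integral_nonneg
    intro x
    exact mul_nonneg (sq_nonneg _) (hφ0 _)
  rw [Real.dist_eq, sub_zero, abs_of_nonneg hI0]
  calc (∫ x : ℝ, (u t (x + mt t)) ^ 2 * φ (x - x₀ + f t - f t₀))
      ≤ (∫ x in Set.Iio (-R - 1 + mt t), (u t x) ^ 2) + δ * ∫ x : ℝ, (u t x) ^ 2 := by
        rw [← htrans, ← htrans2]; rw [hsplit] at hIle; exact hIle
    _ ≤ ε / 2 + ε / 4 := add_le_add hterm1 hterm2
    _ < ε := by linarith
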